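/- Let κ > 0, λ real, p ≠ 0 real, n ≥ 1 an integer, and h > 0. Define ω̄ = -κp² - iλp and, for each m ≥ 0, ω_m = -∑_{j=0}^{m} (2^{j+2}κ/(3^j h²)) sin^{2j+2}(ph/2) - i ∑_{j=0}^{m} (2^j λ/(3^j h)) sin(ph) sin^{2j}(ph/2). Then with z = ph, |ω_{n+1} - ω̄|² - |ω_n - ω̄|² = (2^{n+1} κ² p⁴ / 3^{n+1}) sin^{2n+2}(z/2) · f_n(z), where f_n(z) = (4 sin²(z/2)/z²)·( (8 sin²(z/2)/z²)·(1 - ((2/3)sin²(z/2))^{n+2})/(1 - (2/3)sin²(z/2)) - 2 - (2^{n+3}/(3^{n+1} z²)) sin^{2n+4}(z/2) ) + (λ/κ)²·(sin z/(p² z))·( 2(sin z/z)·(1 - ((2/3)sin²(z/2))^{n+2})/(1 - (2/3)sin²(z/2)) - 2 - (2^{n+1} sin z/(3^{n+1} z)) sin^{2n+2}(z/2) ). -/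

import Mathlib

open Finset in
/-- Fourier symbol of the `m`-th corrected mass-lumped Galerkin scheme for
`u_t + λ u_x - κ u_xx = 0` on a uniform mesh of size `h`, at wave number `p`. -/
noncomputable def omegaCorr (kappa lam p h : ℝ) (m : ℕ) : ℂ :=
  -((∑ j ∈ range (m+1),
      (2:ℝ)^(j+2) * kappa / (3^j * h^2) * Real.sin (p*h/2) ^ (2*j+2) : ℝ) : ℂ)
  - Complex.I * ((∑ j ∈ range (m+1),
      (2:ℝ)^j * lam / (3^j * h) * Real.sin (p*h) * Real.sin (p*h/2) ^ (2*j) : ℝ) : ℂ)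

/-- Exact Fourier symbol `-κ p² - i λ p`. -/
noncomputable def omegaExact (kappa lam p : ℝ) : ℂ :=
  -((kappa * p^2 : ℝ) : ℂ) - Complex.I * ((lam * p : ℝ) : ℂ)

/-- The function `f_n(z)` of Lemma 1. -/
noncomputable def fLem1 (kappa lam p : ℝ) (n : ℕ) (z : ℝ) : ℝ :=
  4 * Real.sin (z/2)^2 / z^2 *
    (8 * Real.sin (z/2)^2 / z^2 *
        ((1 - ((2/3) * Real.sin (z/2)^2)^(n+2)) / (1 - (2/3) * Real.sin (z/2)^2))
      - 2 - 2^(n+3) / (3^(n+1) * z^2) * Real.sin (z/2)^(2*n+4))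
  + (lam/kappa)^2 * (Real.sin z / (p^2 * z)) *
    (2 * (Real.sin z / z) *
        ((1 - ((2/3) * Real.sin (z/2)^2)^(n+2)) / (1 - (2/3) * Real.sin (z/2)^2))
      - 2 - 2^(n+1) * Real.sin z / (3^(n+1) * z) * Real.sin (z/2)^(2*n+2))

set_option maxHeartbeats 1000000 in
theorem stmt_3 (kappa lam p h : ℝ) (n : ℕ) (hkappa : 0 < kappa) (hp : p ≠ 0)
    (hn : 1 ≤ n) (hh : 0 < h) :
    ‖omegaCorr kappa lam p h (n+1) - omegaExact kappa lam p‖ ^ 2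
      - ‖omegaCorr kappa lam p h n - omegaExact kappa lam p‖ ^ 2
    = 2^(n+1) * kappa^2 * p^4 / 3^(n+1) * Real.sin (p*h/2) ^ (2*n+2)
        * fLem1 kappa lam p n (p*h) := by
  have hh0 : h ≠ 0 := ne_of_gt hh
  have hk0 : kappa ≠ 0 := ne_of_gt hkappa
  have habs : ∀ A B C D : ℝ,
      ‖((-(A:ℂ) - Complex.I*(B:ℂ)) - (-(C:ℂ) - Complex.I*(D:ℂ)))‖^2
        = (C-A)^2+(D-B)^2 := by
    intro A B C D
    rw [Complex.sq_norm, Complex.normSq_apply]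
    simp
    ring
  simp only [omegaCorr, omegaExact, fLem1]
  rw [habs, habs]
  set s := Real.sin (p*h/2) with hsdef
  set w := Real.sin (p*h) with hwdef
  have hsq : s^2 ≤ 1 := Real.sin_sq_le_one (p*h/2)
  have hr1 : (2:ℝ)/3*s^2 ≠ 1 := by nlinarith
  have hsum1 : ∀ m:ℕ, (∑ j ∈ Finset.range (m+1),
      (2:ℝ)^(j+2)*kappa/(3^j*h^2)*s^(2*j+2))
      = 4*kappa*s^2/h^2 * (((2/3*s^2)^(m+1)-1)/(2/3*s^2-1)) := by
    intro m
    rw [← geom_sum_eq hr1, Finset.mul_sum]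
    refine Finset.sum_congr rfl fun j _ => ?_
    have h3 : (3:ℝ)^j ≠ 0 := by positivity
    rw [mul_pow, div_pow, pow_add s, pow_mul s]
    field_simp
    ring
  have hsum2 : ∀ m:ℕ, (∑ j ∈ Finset.range (m+1),
      (2:ℝ)^j*lam/(3^j*h)*w*s^(2*j))
      = lam*w/h * (((2/3*s^2)^(m+1)-1)/(2/3*s^2-1)) := by
    intro m
    rw [← geom_sum_eq hr1, Finset.mul_sum]
    refine Finset.sum_congr rfl fun j _ => ?_
    have h3 : (3:ℝ)^j ≠ 0 := by positivity
    rw [mul_pow, div_pow, pow_mul s]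
    field_simp
  rw [hsum1, hsum1, hsum2, hsum2]
  have epow : ((2:ℝ)/3*s^2)^(n+1) = 2^(n+1)/3^(n+1)*s^(2*n+2) := by
    rw [mul_pow, div_pow, ← pow_mul, show 2*(n+1)=2*n+2 from by ring]
  obtain ⟨T, hT⟩ : ∃ T, s^(2*n+2) = T := ⟨_, rfl⟩
  obtain ⟨P2, hP2⟩ : ∃ x, (2:ℝ)^(n+1) = x := ⟨_, rfl⟩
  obtain ⟨P3, hP3⟩ : ∃ x, (3:ℝ)^(n+1) = x := ⟨_, rfl⟩
  obtain ⟨d, hd⟩ : ∃ x, x = (2:ℝ)/3*s^2 - 1 := ⟨_, rfl⟩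
  have hP3' : P3 ≠ 0 := by rw [← hP3]; positivity
  have hd0 : d ≠ 0 := by
    rw [hd]; intro hc; exact hr1 (by linarith [sub_eq_zero.mp hc])
  have hflip : ∀ a b : ℝ, (1-a)/(1-b) = (a-1)/(b-1) := by
    intro a b; rw [← neg_sub a 1, ← neg_sub b 1, neg_div_neg_eq]
  have eB : (((2:ℝ)/3*s^2)^(n+1)-1)/(2/3*s^2-1) = (P2/P3*T - 1)/d := by
    rw [epow, hT, hP2, hP3, hd]
  have eA : (((2:ℝ)/3*s^2)^(n+1+1)-1)/(2/3*s^2-1)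
      = (2/3*s^2*(P2/P3*T) - 1)/d := by
    rw [pow_succ, epow, hT, hP2, hP3, hd]
    ring
  have eC : (1-((2:ℝ)/3*s^2)^(n+2))/(1-2/3*s^2)
      = (2/3*s^2*(P2/P3*T) - 1)/d := by
    rw [hflip, pow_succ, epow, hT, hP2, hP3, hd]
    ring
  have eD : s^(2*n+4) = T*s^2 := by rw [← hT, ← pow_add]
  have eE : (2:ℝ)^(n+3) = P2*4 := by
    rw [← hP2, show n+3 = (n+1)+2 from by ring, pow_add]; norm_num
  rw [eA, eB, eC, eD, eE, hT, hP2, hP3]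
  field_simp
  rw [hd]
  ring
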